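/- Assume $m>0$. For every $r>0$ with $f(r)>0$ one has $r > 2m$, the quantity $k(r)^2 + \frac{4}{3}\Lambda = \frac{4}{r^3}(r-2m)$ is strictly positive, and the ratio identity $\dfrac{\sqrt{f(r)}\,k'(r)}{k(r)^2 + \frac{4}{3}\Lambda} = -\dfrac{1}{2} + \dfrac{1}{2\left(\frac{r}{m} - 2\right)}$ holds. -/

import Mathlib

/-- Schwarzschild–deSitter static slice with `m > 0`: for every `r > 0` with
`f r > 0` one has `r > 2m`, the quantity `k(r)² + (4/3)Λ = (4/r³)(r - 2m)` is
strictly positive, and `√(f r) * k' r / (k(r)² + (4/3)Λ) = -1/2 + 1/(2(r/m - 2))`. -/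
theorem static_slice_ratio_identity (m Λ : ℝ) (hm : 0 < m) (hΛ : 0 < Λ)
    (f k : ℝ → ℝ)
    (hf : ∀ r, f r = 1 - 2*m/r - Λ/3 * r^2)
    (hk : ∀ r, k r = (2/r) * Real.sqrt (f r)) :
    ∀ r : ℝ, 0 < r → 0 < f r →
      2*m < r ∧
      (k r)^2 + (4/3)*Λ = (4/r^3) * (r - 2*m) ∧
      0 < (k r)^2 + (4/3)*Λ ∧
      Real.sqrt (f r) * deriv k r / ((k r)^2 + (4/3)*Λ)
        = -(1/2) + 1/(2*(r/m - 2)) := by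
  intro r hr hfr
  have hr0 : r ≠ 0 := hr.ne'
  have hfrval := hf r
  have h2m : 2*m < r := by
    rw [hfrval] at hfr
    have h1 : 0 < Λ/3 * r^2 := by positivity
    have h2 : 0 < 1 - 2*m/r := by linarith
    have : 2*m/r < 1 := by linarith
    calc 2*m = (2*m/r) * r := by field_simp
    _ < 1 * r := by exact mul_lt_mul_of_pos_right this hr
    _ = r := one_mul r
  set s := Real.sqrt (f r) with hsdef
  have hs2 : s^2 = f r := Real.sq_sqrt hfr.le
  have hs0 : 0 < s := Real.sqrt_pos.mpr hfr
  have hkr := hk r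
  have h2 : (k r)^2 + (4/3)*Λ = (4/r^3) * (r - 2*m) := by
    rw [hkr]
    have : (2/r * s)^2 = 4 * (f r) / r^2 := by
      rw [mul_pow]; rw [hs2]; ring
    rw [this, hfrval]
    field_simp
    ring
  have h3 : 0 < (k r)^2 + (4/3)*Λ := by
    rw [h2]
    have : 0 < r - 2*m := by linarith
    positivity
  -- derivative computation
  have hfe : f = fun x => 1 - 2*m/x - Λ/3 * x^2 := funext hf
  have hd1 : HasDerivAt f (2*m/r^2 - Λ/3*(2*r)) r := by
    rw [hfe]
    have hinv : HasDerivAt (fun x : ℝ => x⁻¹) (-(r^2)⁻¹) r := hasDerivAt_inv hr0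
    have h2m' : HasDerivAt (fun x : ℝ => 2*m/x) (2*m * -(r^2)⁻¹) r := by
      simpa [div_eq_mul_inv] using hinv.const_mul (2*m)
    have hx2 : HasDerivAt (fun x : ℝ => x^2) (2*r) r := by
      simpa using hasDerivAt_pow 2 r
    have hsq : HasDerivAt (fun x : ℝ => Λ/3 * x^2) (Λ/3 * (2*r)) r := hx2.const_mul (Λ/3)
    have := ((hasDerivAt_const r (1:ℝ)).sub h2m').sub hsq
    convert this using 1
    exacts [rfl, rfl, rfl, by ring]
  have hds : HasDerivAt (fun x => Real.sqrt (f x))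
      ((2*m/r^2 - Λ/3*(2*r)) / (2*s)) r := hd1.sqrt hfr.ne'
  have h2r : HasDerivAt (fun x : ℝ => 2/x) (2 * -(r^2)⁻¹) r := by
    simpa [div_eq_mul_inv] using (hasDerivAt_inv hr0).const_mul (2:ℝ)
  have hkd : HasDerivAt k
      ((2 * -(r^2)⁻¹) * s + (2/r) * ((2*m/r^2 - Λ/3*(2*r)) / (2*s))) r := by
    have := h2r.mul hds
    rw [funext hk]
    exact this
  have hderiv : deriv k r = (2 * -(r^2)⁻¹) * s + (2/r) * ((2*m/r^2 - Λ/3*(2*r)) / (2*s)) :=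
    hkd.deriv
  refine ⟨h2m, h2, h3, ?_⟩
  rw [hderiv, h2]
  have hrm : r - 2*m ≠ 0 := by linarith
  have hm0 : m ≠ 0 := hm.ne'
  have hrm2 : r/m - 2 ≠ 0 := by
    have : 2 < r/m := by
      rw [lt_div_iff₀ hm]; linarith
    linarith
  have hs0' : s ≠ 0 := hs0.ne'
  have hA : s * (2 * -(r^2)⁻¹ * s + 2/r * ((2*m/r^2 - Λ/3*(2*r)) / (2*s)))
      = (6*m - 2*r)/r^3 := by
    have hss : s * s = f r := by nlinarith [hs2]
    have step : s * (2 * -(r^2)⁻¹ * s + 2/r * ((2*m/r^2 - Λ/3*(2*r)) / (2*s)))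
        = (-2) * (s*s) / r^2 + (2*m/r^2 - Λ/3*(2*r))/r := by
      field_simp
    rw [step, hss, hfrval]
    field_simp
    ring
  rw [hA]
  have hrm' : -(m*4) + r*2 ≠ 0 := by intro h; apply hrm; linarith
  have hrm'' : -(m*2) + r ≠ 0 := by intro h; apply hrm; linarith
  field_simp [hrm']
  linear_combination (-4) * (mul_inv_cancel₀ hrm'')
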